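/- Let K be an algebraically closed field of characteristic 0. There exist nine distinct points P₁,…,P₉ ∈ P²(K) such that for every integer m ≥ 1, setting I = I(P₁)^m ∩ … ∩ I(P₉)^m in R = K[x,y,z], one has dim_K I_{3m} = 1. -/

import Mathlib

open MvPolynomial

noncomputable section

/-- The homogeneous ideal `I(P)` of all forms vanishing at the point of `ℙ²` with
homogeneous coordinate vector `p`. -/
def pointIdeal (K : Type*) [Field K] (p : Fin 3 → K) : Ideal (MvPolynomial (Fin 3) K) :=
  Ideal.span {f : MvPolynomial (Fin 3) K | (∃ d, f.IsHomogeneous d) ∧ eval p f = 0}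

/-- The fat point ideal `I(Z) = I(P₁)^{m₁} ∩ ⋯ ∩ I(P_n)^{m_n}`. -/
def fatIdeal {K : Type*} [Field K] {n : ℕ} (P : Fin n → Fin 3 → K) (m : Fin n → ℕ) :
    Ideal (MvPolynomial (Fin 3) K) :=
  ⨅ i, pointIdeal K (P i) ^ m i

/-- The degree-`k` graded piece `I_k` of a (homogeneous) ideal `I ⊆ K[x₀,x₁,x₂]`,
as a `K`-subspace of the polynomial ring. -/
def idealPiece {K : Type*} [Field K] (I : Ideal (MvPolynomial (Fin 3) K)) (k : ℕ) :
    Submodule K (MvPolynomial (Fin 3) K) :=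
  Submodule.restrictScalars K I ⊓ homogeneousSubmodule (Fin 3) K k

/-- `dim_K (R/I)_k`, computed as the dimension of `R_k/(I ∩ R_k)`. -/
def quotPieceDim {K : Type*} [Field K] (I : Ideal (MvPolynomial (Fin 3) K)) (k : ℕ) : ℕ :=
  Module.finrank K
    (↥(homogeneousSubmodule (Fin 3) K k) ⧸
      Submodule.comap (homogeneousSubmodule (Fin 3) K k).subtype (idealPiece I k))

/-- The `K`-span of `R₁ · I_t`, i.e. the image of the multiplication map
`μ_t : I_t ⊗ R₁ → I_{t+1}`. -/
def mulSpan {K : Type*} [Field K] (I : Ideal (MvPolynomial (Fin 3) K)) (t : ℕ) :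
    Submodule K (MvPolynomial (Fin 3) K) :=
  Submodule.span K
    {h : MvPolynomial (Fin 3) K |
      ∃ f ∈ homogeneousSubmodule (Fin 3) K 1, ∃ g ∈ idealPiece I t, h = f * g}

end

noncomputable section StmtAux

variable {K : Type*} [Field K]

/-- weight = degree in the last two variables -/
def wdeg (d : Fin 3 →₀ ℕ) : ℕ := d 1 + d 2

lemma wdeg_add (a b : Fin 3 →₀ ℕ) : wdeg (a + b) = wdeg a + wdeg b := by
  simp [wdeg, Finsupp.add_apply]; ring

def Jyz (K : Type*) [Field K] : Ideal (MvPolynomial (Fin 3) K) :=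
  Ideal.span {X 1, X 2}

def Cb (K : Type*) [Field K] : MvPolynomial (Fin 3) K := X 0 ^ 2 * X 2 - X 1 ^ 3

lemma degree_fin3 (d : Fin 3 →₀ ℕ) : d.degree = d 0 + d 1 + d 2 := by
  have h : d.support.sum d = ∑ i : Fin 3, d i := by
    refine Finset.sum_subset (Finset.subset_univ _) ?_
    intro x _ hx
    simpa using (Finsupp.notMem_support_iff.mp hx)
  rw [Finsupp.degree_apply, h, Fin.sum_univ_three]

lemma hom_supp_sum {φ : MvPolynomial (Fin 3) K} {n : ℕ} (h : φ.IsHomogeneous n)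
    {d : Fin 3 →₀ ℕ} (hd : d ∈ φ.support) : d 0 + d 1 + d 2 = n := by
  have h2 := h (mem_support_iff.mp hd)
  rw [← degree_fin3]
  rw [Finsupp.degree_eq_weight_one]
  exact h2

lemma single_decomp (d : Fin 3 →₀ ℕ) :
    d = Finsupp.single 0 (d 0) + Finsupp.single 1 (d 1) + Finsupp.single 2 (d 2) := by
  ext j
  fin_cases j <;> simp [Finsupp.single_apply]

lemma monomial_eq3 (d : Fin 3 →₀ ℕ) (c : K) :
    monomial d c = C c * X 0 ^ d 0 * X 1 ^ d 1 * X 2 ^ d 2 := by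
  rw [C_apply]
  simp only [X_pow_eq_monomial, monomial_mul, mul_one, zero_add]
  exact congrArg (fun e => monomial e c) (single_decomp d)

lemma mem_Jyz_support {f : MvPolynomial (Fin 3) K} (hf : f ∈ Jyz K) :
    ∀ d ∈ f.support, 1 ≤ wdeg d := by
  rw [Jyz, Ideal.mem_span_pair] at hf
  obtain ⟨p, q, hpq⟩ := hf
  intro d hd
  rw [← hpq] at hd
  have hd' := MvPolynomial.support_add (p := p * X 1) (q := q * X 2) hd
  classical
  rcases Finset.mem_union.mp hd' with h | h
  · have := MvPolynomial.support_mul _ _ h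
    rcases Finset.mem_add.mp this with ⟨a, ha, b, hb, rfl⟩
    have hb' : b = Finsupp.single 1 1 := by simpa [MvPolynomial.support_X] using hb
    subst hb'
    simp [wdeg, Finsupp.add_apply, Finsupp.single_apply]
    omega
  · have := MvPolynomial.support_mul _ _ h
    rcases Finset.mem_add.mp this with ⟨a, ha, b, hb, rfl⟩
    have hb' : b = Finsupp.single 2 1 := by simpa [MvPolynomial.support_X] using hb
    subst hb'
    simp [wdeg, Finsupp.add_apply, Finsupp.single_apply]
    omega

lemma mem_Jpow {m : ℕ} {f : MvPolynomial (Fin 3) K} :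
    f ∈ (Jyz K) ^ m ↔ ∀ d ∈ f.support, m ≤ wdeg d := by
  constructor
  · induction m generalizing f with
    | zero => intro _ d _; exact Nat.zero_le _
    | succ m ih =>
      intro hf
      rw [pow_succ] at hf
      refine Submodule.mul_induction_on hf ?_ ?_
      · intro a ha b hb d hd
        have hsub := MvPolynomial.support_mul a b hd
        rcases Finset.mem_add.mp hsub with ⟨u, hu, v, hv, rfl⟩
        rw [wdeg_add]
        have h1 := ih ha u hu
        have h2 := mem_Jyz_support hb v hv
        omega
      · intro x y hx hy d hd
        have := MvPolynomial.support_add (p := x) (q := y) hd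
        rcases Finset.mem_union.mp this with h | h
        · exact hx d h
        · exact hy d h
  · intro hf
    have hrw : f = ∑ d ∈ f.support, monomial d (coeff d f) :=
      (support_sum_monomial_coeff f).symm
    rw [hrw]
    refine Ideal.sum_mem _ ?_
    intro d hd
    have hw := hf d hd
    rw [monomial_eq3]
    have hx1 : (X 1 : MvPolynomial (Fin 3) K) ∈ Jyz K :=
      Ideal.subset_span (by simp)
    have hx2 : (X 2 : MvPolynomial (Fin 3) K) ∈ Jyz K :=
      Ideal.subset_span (by simp)
    have hmem : (X 1 : MvPolynomial (Fin 3) K) ^ d 1 * X 2 ^ d 2 ∈ (Jyz K) ^ (wdeg d) := by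
      rw [wdeg, pow_add]
      exact Ideal.mul_mem_mul (Ideal.pow_mem_pow hx1 _) (Ideal.pow_mem_pow hx2 _)
    have : (X 1 : MvPolynomial (Fin 3) K) ^ d 1 * X 2 ^ d 2 ∈ (Jyz K) ^ m :=
      Ideal.pow_le_pow_right hw hmem
    have := Ideal.mul_mem_left _ (C (coeff d f) * X 0 ^ d 0) this
    convert this using 1
    ring

def e201 : Fin 3 →₀ ℕ := Finsupp.single 0 2 + Finsupp.single 2 1

lemma e201_apply : e201 0 = 2 ∧ e201 1 = 0 ∧ e201 2 = 1 := by
  refine ⟨?_, ?_, ?_⟩ <;> simp [e201, Finsupp.single_apply]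

lemma colon_step {m : ℕ} {c g : MvPolynomial (Fin 3) K}
    (hc3 : c.IsHomogeneous 3) (hcJ : c ∈ Jyz K) (hc1 : coeff e201 c = 1)
    (h : c * g ∈ (Jyz K) ^ (m + 1)) : g ∈ (Jyz K) ^ m := by
  classical
  rw [mem_Jpow] at h ⊢
  by_contra hcon
  push_neg at hcon
  obtain ⟨d0, hd0s, hd0w⟩ := hcon
  -- minimal wdeg over support of g
  have hne : (g.support.image wdeg).Nonempty := ⟨wdeg d0, Finset.mem_image_of_mem _ hd0s⟩
  set k := (g.support.image wdeg).min' hne with hk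
  have hmin : ∀ d ∈ g.support, k ≤ wdeg d := fun d hd =>
    Finset.min'_le _ _ (Finset.mem_image_of_mem _ hd)
  have hklt : k < m := lt_of_le_of_lt (hmin d0 hd0s) hd0w
  -- the set of monomials of minimal weight
  have hTne : ((g.support.filter (fun d => wdeg d = k))).Nonempty := by
    obtain ⟨d, hd, hdw⟩ := Finset.mem_image.mp (Finset.min'_mem _ hne)
    exact ⟨d, Finset.mem_filter.mpr ⟨hd, hdw⟩⟩
  obtain ⟨dstar, hdstarT, hdstarmax⟩ :=
    Finset.exists_max_image _ (fun d => d 2) hTne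
  rw [Finset.mem_filter] at hdstarT
  obtain ⟨hdstar_supp, hdstar_w⟩ := hdstarT
  -- the target exponent
  set e := dstar + e201 with he
  have hwe : wdeg e = k + 1 := by
    rw [he, wdeg_add, hdstar_w]
    simp [wdeg, e201_apply.2.1, e201_apply.2.2]
  have hkey : coeff e (c * g) = coeff dstar g := by
    rw [MvPolynomial.coeff_mul]
    have hmem : ((e201, dstar) : (Fin 3 →₀ ℕ) × (Fin 3 →₀ ℕ)) ∈ Finset.HasAntidiagonal.antidiagonal e := by
      rw [Finset.HasAntidiagonal.mem_antidiagonal, he]; exact add_comm _ _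
    have h0 : ∀ x ∈ Finset.HasAntidiagonal.antidiagonal e,
        x ≠ ((e201, dstar) : (Fin 3 →₀ ℕ) × (Fin 3 →₀ ℕ)) → coeff x.1 c * coeff x.2 g = 0 := by
      rintro ⟨a, b⟩ hab hne'
      rw [Finset.HasAntidiagonal.mem_antidiagonal] at hab
      by_contra hnz
      have ha : a ∈ c.support := by
        rw [mem_support_iff]; intro h0; apply hnz; simp [h0]
      have hb : b ∈ g.support := by
        rw [mem_support_iff]; intro h0; apply hnz; simp [h0]
      have hwa : 1 ≤ wdeg a := mem_Jyz_support hcJ a ha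
      have hwb : k ≤ wdeg b := hmin b hb
      have hsum : wdeg a + wdeg b = k + 1 := by rw [← wdeg_add, hab, hwe]
      have hwa1 : wdeg a = 1 := by omega
      have hwb1 : wdeg b = k := by omega
      have hdeg3 : a 0 + a 1 + a 2 = 3 := hom_supp_sum hc3 ha
      have habj : ∀ j, a j + b j = e j := fun j => by
        rw [← hab]; simp [Finsupp.add_apply]
      have he0 : e 0 = dstar 0 + 2 := by rw [he]; simp [Finsupp.add_apply, e201_apply.1]
      have he1 : e 1 = dstar 1 := by rw [he]; simp [Finsupp.add_apply, e201_apply.2.1]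
      have he2 : e 2 = dstar 2 + 1 := by rw [he]; simp [Finsupp.add_apply, e201_apply.2.2]
      rcases Nat.lt_or_ge (a 2) 1 with ha2 | ha2
      · -- a 2 = 0, so a 1 = 1, and b 2 = dstar 2 + 1 contradicts maximality
        have hb2 : b 2 = dstar 2 + 1 := by have := habj 2; omega
        have : b 2 ≤ dstar 2 := by
          apply hdstarmax
          exact Finset.mem_filter.mpr ⟨hb, hwb1⟩
        omega
      · -- a 2 = 1, a 1 = 0, a 0 = 2, so a = e201 and b = dstar
        have ha2' : a 2 = 1 := by unfold wdeg at hwa1; omega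
        have ha1 : a 1 = 0 := by unfold wdeg at hwa1; omega
        have ha0 : a 0 = 2 := by omega
        have haeq : a = e201 := by
          ext j; fin_cases j
          · show a 0 = e201 0; rw [ha0, e201_apply.1]
          · show a 1 = e201 1; rw [ha1, e201_apply.2.1]
          · show a 2 = e201 2; rw [ha2', e201_apply.2.2]
        have hbeq : b = dstar := by
          ext j
          have := habj j
          rw [haeq] at this
          have he' : e j = dstar j + e201 j := by rw [he]; simp [Finsupp.add_apply]
          omega
        exact hne' (by rw [haeq, hbeq])
    rw [Finset.sum_eq_single_of_mem _ hmem h0, hc1, one_mul]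
  have hes : e ∈ (c * g).support := by
    rw [mem_support_iff, hkey]
    exact mem_support_iff.mp hdstar_supp
  have := h e hes
  omega

-- evaluation compositions
lemma aeval_self_eq_eval (p : Fin 3 → K) (f : MvPolynomial (Fin 3) K) :
    aeval p f = eval p f := rfl

lemma eval_aeval3 (p : Fin 3 → K) (gs : Fin 3 → MvPolynomial (Fin 3) K)
    (f : MvPolynomial (Fin 3) K) :
    eval p (aeval gs f) = eval (fun j => eval p (gs j)) f := by
  show (aeval p) ((aeval gs) f) = (aeval fun j => (aeval p) (gs j)) f
  exact comp_aeval_apply (R := K) (f := gs) (aeval p : MvPolynomial (Fin 3) K →ₐ[K] K) f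

def ptv (t : K) : Fin 3 → K := ![1, t, t ^ 3]

def subF (t : K) : Fin 3 → MvPolynomial (Fin 3) K :=
  ![X 0, X 1 + C t * X 0, X 2 + C (t ^ 3) * X 0]

def subB (t : K) : Fin 3 → MvPolynomial (Fin 3) K :=
  ![X 0, X 1 - C t * X 0, X 2 - C (t ^ 3) * X 0]

lemma subF_hom (t : K) (j : Fin 3) : (subF t j).IsHomogeneous 1 := by
  fin_cases j
  · exact isHomogeneous_X _ _
  · exact (isHomogeneous_X _ _).add ((isHomogeneous_X K 0).C_mul t)
  · exact (isHomogeneous_X _ _).add ((isHomogeneous_X K 0).C_mul (t ^ 3))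

lemma subB_hom (t : K) (j : Fin 3) : (subB t j).IsHomogeneous 1 := by
  fin_cases j
  · exact isHomogeneous_X _ _
  · exact (isHomogeneous_X _ _).sub ((isHomogeneous_X K 0).C_mul t)
  · exact (isHomogeneous_X _ _).sub ((isHomogeneous_X K 0).C_mul (t ^ 3))

lemma subFB (t : K) (f : MvPolynomial (Fin 3) K) :
    aeval (subF t) (aeval (subB t) f) = f := by
  rw [comp_aeval_apply]
  have h : (fun i => aeval (subF t) (subB t i)) = (X : Fin 3 → MvPolynomial (Fin 3) K) := by
    funext i; fin_cases i <;> simp [subF, subB]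
  rw [h, aeval_X_left_apply]

lemma subBF (t : K) (f : MvPolynomial (Fin 3) K) :
    aeval (subB t) (aeval (subF t) f) = f := by
  rw [comp_aeval_apply]
  have h : (fun i => aeval (subB t) (subF t i)) = (X : Fin 3 → MvPolynomial (Fin 3) K) := by
    funext i; fin_cases i <;> simp [subF, subB]
  rw [h, aeval_X_left_apply]

-- the point ideal at (1,0,0) is (X1, X2)
lemma pointIdeal_origin : pointIdeal K ![1, 0, 0] = Jyz K := by
  apply le_antisymm
  · rw [pointIdeal, Ideal.span_le]
    rintro f ⟨⟨n, hfh⟩, hfe⟩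
    rw [SetLike.mem_coe, show Jyz K = (Jyz K) ^ 1 by rw [pow_one], mem_Jpow]
    intro d hd
    by_contra hw
    have hw0 : d 1 = 0 ∧ d 2 = 0 := by unfold wdeg at hw; omega
    have hd0 : d 0 = n := by have := hom_supp_sum hfh hd; omega
    -- then eval at (1,0,0) equals coeff d f, which is nonzero
    have heval : eval (![1, 0, 0] : Fin 3 → K) f = coeff d f := by
      have h0 : ∀ e ∈ f.support, e ≠ d →
          coeff e f * ∏ j, (![1, 0, 0] : Fin 3 → K) j ^ e j = 0 := by
        intro e he hne
        have hesum : e 0 + e 1 + e 2 = n := hom_supp_sum hfh he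
        have hene : e 1 ≠ 0 ∨ e 2 ≠ 0 := by
          by_contra hcon
          push_neg at hcon
          apply hne
          ext j; fin_cases j
          · show e 0 = d 0; omega
          · show e 1 = d 1; omega
          · show e 2 = d 2; omega
        rcases hene with h1 | h1
        · have : (![1, 0, 0] : Fin 3 → K) 1 ^ e 1 = 0 := by
            simp [zero_pow h1]
          rw [Fin.prod_univ_three, this]
          ring
        · have : (![1, 0, 0] : Fin 3 → K) 2 ^ e 2 = 0 := by
            simp [zero_pow h1]
          rw [Fin.prod_univ_three, this]
          ring
      rw [eval_eq', Finset.sum_eq_single_of_mem d hd h0, Fin.prod_univ_three]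
      simp [hw0.1, hw0.2]
    rw [hfe] at heval
    exact (mem_support_iff.mp hd) heval.symm
  · rw [Jyz, Ideal.span_le]
    rintro f hf
    rcases hf with h | h
    · subst h
      exact Ideal.subset_span ⟨⟨1, isHomogeneous_X _ _⟩, by simp⟩
    · rw [Set.mem_singleton_iff] at h
      subst h
      exact Ideal.subset_span ⟨⟨1, isHomogeneous_X _ _⟩, by simp⟩

lemma map_BF (t : K) (S : Ideal (MvPolynomial (Fin 3) K)) :
    Ideal.map (aeval (subB t) : MvPolynomial (Fin 3) K →ₐ[K] MvPolynomial (Fin 3) K)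
      (Ideal.map (aeval (subF t) : MvPolynomial (Fin 3) K →ₐ[K] MvPolynomial (Fin 3) K) S)
      = S := by
  apply le_antisymm
  · rw [Ideal.map_le_iff_le_comap, Ideal.map_le_iff_le_comap]
    intro x hx
    simp only [Ideal.mem_comap]
    rwa [subBF]
  · intro x hx
    have h := Ideal.mem_map_of_mem (aeval (subB t) : MvPolynomial (Fin 3) K →ₐ[K] _)
      (Ideal.mem_map_of_mem (aeval (subF t) : MvPolynomial (Fin 3) K →ₐ[K] _) hx)
    rwa [subBF] at h

lemma map_subF_pointIdeal (t : K) :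
    Ideal.map (aeval (subF t) : MvPolynomial (Fin 3) K →ₐ[K] MvPolynomial (Fin 3) K)
      (pointIdeal K (ptv t)) = Jyz K := by
  rw [← pointIdeal_origin]
  apply le_antisymm
  · rw [pointIdeal, Ideal.map_span, Ideal.span_le]
    rintro _ ⟨f, ⟨⟨n, hfh⟩, hfe⟩, rfl⟩
    refine Ideal.subset_span ⟨⟨n, ?_⟩, ?_⟩
    · simpa using hfh.aeval (subF t) (subF_hom t)
    · rw [eval_aeval3]
      have h : (fun j => eval (![1, 0, 0] : Fin 3 → K) (subF t j)) = ptv t := by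
        funext j; fin_cases j <;> simp [subF, ptv]
      rw [h, hfe]
  · intro x hx
    have h1 : Ideal.map (aeval (subB t) : MvPolynomial (Fin 3) K →ₐ[K] _)
        (pointIdeal K ![1, 0, 0]) ≤ pointIdeal K (ptv t) := by
      rw [pointIdeal, Ideal.map_span, Ideal.span_le]
      rintro _ ⟨f, ⟨⟨n, hfh⟩, hfe⟩, rfl⟩
      refine Ideal.subset_span ⟨⟨n, ?_⟩, ?_⟩
      · simpa using hfh.aeval (subB t) (subB_hom t)
      · rw [eval_aeval3]
        have h : (fun j => eval (ptv t) (subB t j)) = ![1, 0, 0] := by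
          funext j; fin_cases j <;> simp [subB, ptv]
        rw [h, hfe]
    have h2 : aeval (subB t) x ∈ pointIdeal K (ptv t) :=
      h1 (Ideal.mem_map_of_mem _ hx)
    have h3 := Ideal.mem_map_of_mem (aeval (subF t) : MvPolynomial (Fin 3) K →ₐ[K] _) h2
    rwa [subFB] at h3

lemma tau_mem_pow (t : K) {m : ℕ} {g : MvPolynomial (Fin 3) K}
    (h : g ∈ pointIdeal K (ptv t) ^ m) : aeval (subF t) g ∈ (Jyz K) ^ m := by
  have h2 := Ideal.mem_map_of_mem (aeval (subF t) : MvPolynomial (Fin 3) K →ₐ[K] _) h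
  rwa [Ideal.map_pow, map_subF_pointIdeal] at h2

lemma mem_pow_of_tau (t : K) {m : ℕ} {g : MvPolynomial (Fin 3) K}
    (h : aeval (subF t) g ∈ (Jyz K) ^ m) : g ∈ pointIdeal K (ptv t) ^ m := by
  rw [← map_subF_pointIdeal t, ← Ideal.map_pow] at h
  have h2 := Ideal.mem_map_of_mem (aeval (subB t) : MvPolynomial (Fin 3) K →ₐ[K] _) h
  rw [map_BF] at h2
  rwa [subBF] at h2

lemma Cb_hom : (Cb K).IsHomogeneous 3 := by
  have h1 : ((X 0 : MvPolynomial (Fin 3) K) ^ 2 * X 2).IsHomogeneous 3 :=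
    (isHomogeneous_X_pow _ _).mul (isHomogeneous_X _ _)
  have h2 : ((X 1 : MvPolynomial (Fin 3) K) ^ 3).IsHomogeneous 3 :=
    isHomogeneous_X_pow _ _
  exact h1.sub h2

lemma Cb_ne_zero : (Cb K) ≠ 0 := by
  intro h
  have h2 := congrArg (eval (![0, 1, 0] : Fin 3 → K)) h
  simp [Cb] at h2

lemma Cb_mem (t : K) : Cb K ∈ pointIdeal K (ptv t) := by
  refine Ideal.subset_span ⟨⟨3, Cb_hom⟩, ?_⟩
  simp [Cb, ptv]

lemma tau_Cb_mem (t : K) : aeval (subF t) (Cb K) ∈ Jyz K := by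
  have h := Ideal.mem_map_of_mem (aeval (subF t) : MvPolynomial (Fin 3) K →ₐ[K] _) (Cb_mem t)
  rwa [map_subF_pointIdeal] at h

lemma tau_Cb_hom (t : K) : (aeval (subF t) (Cb K)).IsHomogeneous 3 := by
  simpa only [one_mul] using Cb_hom.aeval (subF t) (subF_hom t)

lemma mono2 (i j : Fin 3) (a b : ℕ) (c : K) :
    monomial (Finsupp.single i a + Finsupp.single j b) c
      = C c * X i ^ a * X j ^ b := by
  rw [X_pow_eq_monomial, X_pow_eq_monomial, C_apply, monomial_mul, monomial_mul,
    mul_one, mul_one, zero_add]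

lemma mono1 (i : Fin 3) (a : ℕ) (c : K) :
    monomial (Finsupp.single i a) c = C c * X i ^ a := by
  rw [X_pow_eq_monomial, C_apply, monomial_mul, mul_one, zero_add]

lemma coeff_tau_Cb (t : K) : coeff e201 (aeval (subF t) (Cb K)) = 1 := by
  have h0 : aeval (subF t) (Cb K)
      = (X 0 : MvPolynomial (Fin 3) K) ^ 2 * (X 2 + C (t ^ 3) * X 0)
        - (X 1 + C t * X 0) ^ 3 := by
    simp [Cb, subF]
  rw [h0]
  have h : ((X 0 : MvPolynomial (Fin 3) K) ^ 2 * (X 2 + C (t ^ 3) * X 0) - (X 1 + C t * X 0) ^ 3)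
      = monomial (Finsupp.single 0 2 + Finsupp.single 2 1) 1
        + monomial (Finsupp.single 0 3) (t ^ 3 - t ^ 3)
        + monomial (Finsupp.single 0 2 + Finsupp.single 1 1) (-(3 * t ^ 2))
        + monomial (Finsupp.single 0 1 + Finsupp.single 1 2) (-(3 * t))
        + monomial (Finsupp.single 1 3) (-1) := by
    rw [mono2, mono2, mono2, mono1, mono1]
    simp only [map_sub, map_neg, map_mul, map_pow, map_ofNat, map_one]
    ring
  rw [h]
  have h1 : (Finsupp.single (0 : Fin 3) 3) ≠ Finsupp.single 0 2 + Finsupp.single 2 1 := by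
    intro hc
    have := DFunLike.congr_fun hc 0
    simp [Finsupp.single_apply] at this
  have h2 : (Finsupp.single (0 : Fin 3) 2 + Finsupp.single 1 1)
      ≠ Finsupp.single 0 2 + Finsupp.single 2 1 := by
    intro hc
    have := DFunLike.congr_fun hc 1
    simp [Finsupp.single_apply] at this
  have h3 : (Finsupp.single (0 : Fin 3) 1 + Finsupp.single 1 2)
      ≠ Finsupp.single 0 2 + Finsupp.single 2 1 := by
    intro hc
    have := DFunLike.congr_fun hc 1
    simp [Finsupp.single_apply] at this
  have h4 : (Finsupp.single (1 : Fin 3) 3) ≠ Finsupp.single 0 2 + Finsupp.single 2 1 := by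
    intro hc
    have := DFunLike.congr_fun hc 1
    simp [Finsupp.single_apply] at this
  simp only [e201]
  simp [coeff_add, coeff_monomial, h1, h2, h3, h4]

def pmap (K : Type*) [Field K] : Fin 3 → Polynomial K := ![1, Polynomial.X, Polynomial.X ^ 3]

lemma Phi_monomial (d : Fin 3 →₀ ℕ) (c : K) :
    aeval (pmap K) (monomial d c) = Polynomial.C c * Polynomial.X ^ (d 1 + 3 * d 2) := by
  rw [monomial_eq3]
  simp [pmap, ← pow_mul]
  rw [mul_assoc, ← pow_add]

lemma Phi_apply (f : MvPolynomial (Fin 3) K) :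
    aeval (pmap K) f
      = ∑ d ∈ f.support, Polynomial.C (coeff d f) * Polynomial.X ^ (d 1 + 3 * d 2) := by
  conv_lhs => rw [← support_sum_monomial_coeff f]
  rw [map_sum]
  exact Finset.sum_congr rfl fun d _ => Phi_monomial d _

lemma Phi_natDegree {D : ℕ} {f : MvPolynomial (Fin 3) K} (hf : f.IsHomogeneous D) :
    (aeval (pmap K) f).natDegree ≤ 3 * D := by
  rw [Phi_apply]
  apply Polynomial.natDegree_sum_le_of_forall_le
  intro d hd
  have hs := hom_supp_sum hf hd
  refine le_trans (Polynomial.natDegree_C_mul_le _ _) ?_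
  rw [Polynomial.natDegree_X_pow]
  omega

lemma Phi_coeff_top {D : ℕ} {f : MvPolynomial (Fin 3) K} (hf : f.IsHomogeneous D)
    (hD : 1 ≤ D) : (aeval (pmap K) f).coeff (3 * D - 1) = 0 := by
  rw [Phi_apply, Polynomial.finset_sum_coeff]
  apply Finset.sum_eq_zero
  intro d hd
  have hs := hom_supp_sum hf hd
  rw [Polynomial.coeff_C_mul, Polynomial.coeff_X_pow, if_neg (by omega), mul_zero]

lemma eval_Phi (t : K) (f : MvPolynomial (Fin 3) K) :
    Polynomial.eval t (aeval (pmap K) f) = eval (ptv t) f := by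
  have h := comp_aeval_apply (R := K) (f := pmap K)
    (Polynomial.aeval t : Polynomial K →ₐ[K] K) f
  have h2 : (fun i => Polynomial.aeval t (pmap K i)) = ptv t := by
    funext i; fin_cases i <;> simp [pmap, ptv]
  rw [h2] at h
  rw [← Polynomial.coe_aeval_eq_eval]
  rw [h]
  rfl

lemma Phi_pow_dvd (t : K) {m : ℕ} {g : MvPolynomial (Fin 3) K}
    (h : g ∈ pointIdeal K (ptv t) ^ m) :
    (Polynomial.X - Polynomial.C t) ^ m ∣ aeval (pmap K) g := by
  have hmap : Ideal.map (aeval (pmap K) : MvPolynomial (Fin 3) K →ₐ[K] Polynomial K)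
      (pointIdeal K (ptv t)) ≤ Ideal.span {Polynomial.X - Polynomial.C t} := by
    rw [pointIdeal, Ideal.map_span, Ideal.span_le]
    rintro _ ⟨f, ⟨_, hfe⟩, rfl⟩
    rw [SetLike.mem_coe, Ideal.mem_span_singleton, Polynomial.dvd_iff_isRoot,
      Polynomial.IsRoot, eval_Phi, hfe]
  have h1 := Ideal.mem_map_of_mem (aeval (pmap K) : MvPolynomial (Fin 3) K →ₐ[K] _) h
  rw [Ideal.map_pow] at h1
  have h2 := Ideal.pow_right_mono hmap m h1
  rw [Ideal.span_singleton_pow] at h2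
  rwa [Ideal.mem_span_singleton] at h2

lemma X0_prime : Prime (X 0 : MvPolynomial (Fin 3) K) := by
  have hp := Polynomial.prime_X (R := MvPolynomial (Fin 2) K)
  rw [← MvPolynomial.finSuccEquiv_X_zero (R := K) (n := 2)] at hp
  exact (MulEquiv.prime_iff
    (MvPolynomial.finSuccEquiv K 2).toRingEquiv.toMulEquiv).mp hp

lemma X0_not_dvd : ¬ (X 0 : MvPolynomial (Fin 3) K) ∣ Cb K := by
  rintro ⟨u, hu⟩
  have h := congrArg (eval (![0, 1, 0] : Fin 3 → K)) hu
  simp [Cb] at h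

lemma Cb_dvd_of_Phi_zero {D : ℕ} {G : MvPolynomial (Fin 3) K} (hG : G.IsHomogeneous D)
    (hphi : aeval (pmap K) G = 0) : Cb K ∣ G := by
  classical
  set Lam : Polynomial K → MvPolynomial (Fin 3) K := fun p =>
    ∑ v ∈ Finset.range (3 * D + 1),
      monomial (Finsupp.single 0 (3 * D - v) + Finsupp.single 1 v) (p.coeff v) with hLam
  have hLam0 : Lam 0 = 0 := by simp [hLam]
  have hLam_sum' : ∀ (s : Finset (Fin 3 →₀ ℕ)) (p : (Fin 3 →₀ ℕ) → Polynomial K),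
      Lam (∑ i ∈ s, p i) = ∑ i ∈ s, Lam (p i) := by
    intro s p
    simp only [hLam, Polynomial.finset_sum_coeff, map_sum]
    exact Finset.sum_comm
  have hkey : ∀ d ∈ G.support, X 0 ^ (2 * D) * monomial d (coeff d G)
      - Lam (aeval (pmap K) (monomial d (coeff d G))) ∈ Ideal.span {Cb K} := by
    intro d hd
    have hs := hom_supp_sum hG hd
    set c := coeff d G with hc
    rw [Phi_monomial]
    set e := d 1 + 3 * d 2 with he
    have hLamCX : Lam (Polynomial.C c * Polynomial.X ^ e)
        = monomial (Finsupp.single 0 (3 * D - e) + Finsupp.single 1 e) c := by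
      simp only [hLam, Polynomial.coeff_C_mul, Polynomial.coeff_X_pow]
      have h0 : ∀ v ∈ Finset.range (3 * D + 1), v ≠ e →
          monomial (Finsupp.single (0 : Fin 3) (3 * D - v) + Finsupp.single 1 v)
            (c * if v = e then 1 else 0) = 0 := by
        intro v _ hv
        rw [if_neg hv, mul_zero, map_zero]
      rw [Finset.sum_eq_single_of_mem e (Finset.mem_range.mpr (by omega)) h0,
        if_pos rfl, mul_one]
    rw [hLamCX, monomial_eq3, mono2]
    set w := 3 * d 0 + 2 * d 1 with hw
    have hu : 3 * D - e = w := by omega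
    rw [hu]
    obtain ⟨q, hq⟩ := sub_dvd_pow_sub_pow
      ((X 0 : MvPolynomial (Fin 3) K) ^ 2 * X 2) (X 1 ^ 3) (d 2)
    rw [Ideal.mem_span_singleton]
    refine ⟨C c * X 0 ^ w * X 1 ^ d 1 * q, ?_⟩
    have hX0 : (X 0 : MvPolynomial (Fin 3) K) ^ (2 * D) * X 0 ^ d 0
        = X 0 ^ w * (X 0 ^ 2) ^ d 2 := by
      rw [← pow_add, ← pow_mul, ← pow_add]; congr 1; omega
    have hX1 : (X 1 : MvPolynomial (Fin 3) K) ^ e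
        = X 1 ^ d 1 * (X 1 ^ 3) ^ d 2 := by
      rw [← pow_mul, ← pow_add]
    have hCb : Cb K = X 0 ^ 2 * X 2 - X 1 ^ 3 := rfl
    calc X 0 ^ (2 * D) * (C c * X 0 ^ d 0 * X 1 ^ d 1 * X 2 ^ d 2) - C c * X 0 ^ w * X 1 ^ e
        = C c * X 0 ^ w * X 1 ^ d 1 * ((X 0 ^ 2 * X 2) ^ d 2 - (X 1 ^ 3) ^ d 2) := by
          rw [hX1,
            show (X 0 : MvPolynomial (Fin 3) K) ^ (2 * D)
                * (C c * X 0 ^ d 0 * X 1 ^ d 1 * X 2 ^ d 2)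
              = C c * (X 0 ^ (2 * D) * X 0 ^ d 0) * X 1 ^ d 1 * X 2 ^ d 2 by ring,
            hX0, mul_pow]
          ring
      _ = Cb K * (C c * X 0 ^ w * X 1 ^ d 1 * q) := by
          rw [hq, hCb]; ring
  have hsplit : X 0 ^ (2 * D) * G - Lam (aeval (pmap K) G)
      = ∑ d ∈ G.support, (X 0 ^ (2 * D) * monomial d (coeff d G)
          - Lam (aeval (pmap K) (monomial d (coeff d G)))) := by
    conv_lhs => rw [← support_sum_monomial_coeff G]
    rw [map_sum, hLam_sum', Finset.mul_sum, ← Finset.sum_sub_distrib]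
  have hmain : X 0 ^ (2 * D) * G - Lam (aeval (pmap K) G) ∈ Ideal.span {Cb K} := by
    rw [hsplit]
    exact Ideal.sum_mem _ hkey
  rw [hphi, hLam0, sub_zero, Ideal.mem_span_singleton] at hmain
  obtain ⟨H, hH⟩ := hmain
  have hdvdH : (X 0 : MvPolynomial (Fin 3) K) ^ (2 * D) ∣ H := by
    refine X0_prime.pow_dvd_of_dvd_mul_left _ X0_not_dvd ?_
    exact ⟨G, hH.symm⟩
  obtain ⟨H', rfl⟩ := hdvdH
  refine ⟨H', ?_⟩
  have hcan : (X 0 : MvPolynomial (Fin 3) K) ^ (2 * D) * G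
      = X 0 ^ (2 * D) * (Cb K * H') := by
    rw [hH]; ring
  exact mul_left_cancel₀ (pow_ne_zero _ (MvPolynomial.X_ne_zero 0)) hcan

lemma hom_of_mul {f g : MvPolynomial (Fin 3) K} {a b : ℕ} (hf : f.IsHomogeneous a)
    (hf0 : f ≠ 0) (hfg : (f * g).IsHomogeneous (a + b)) : g.IsHomogeneous b := by
  classical
  have hcomp : ∀ e : ℕ, e ≠ b → homogeneousComponent e g = 0 := by
    intro e hne
    rcases le_or_gt e g.totalDegree with hle | hlt
    swap
    · exact homogeneousComponent_eq_zero _ g hlt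
    have h1 : f * g = ∑ i ∈ Finset.range (g.totalDegree + 1),
        f * homogeneousComponent i g := by
      rw [← Finset.mul_sum, sum_homogeneousComponent]
    have h2 := congrArg (homogeneousComponent (a + e)) h1
    rw [map_sum] at h2
    have h3 : ∀ i ∈ Finset.range (g.totalDegree + 1),
        homogeneousComponent (a + e) (f * homogeneousComponent i g)
          = if i = e then f * homogeneousComponent i g else 0 := by
      intro i _
      have hhom : (f * homogeneousComponent i g).IsHomogeneous (a + i) :=
        hf.mul (homogeneousComponent_isHomogeneous i g)
      rw [homogeneousComponent_of_mem ((mem_homogeneousSubmodule _ _).mpr hhom)]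
      by_cases hie : i = e
      · subst hie; rw [if_pos rfl, if_pos rfl]
      · rw [if_neg (fun hh => hie (by omega)), if_neg hie]
    rw [Finset.sum_congr rfl h3, Finset.sum_ite_eq'
      (Finset.range (g.totalDegree + 1)) e (fun i => f * homogeneousComponent i g)] at h2
    rw [if_pos (Finset.mem_range.mpr (by omega))] at h2
    have h4 : homogeneousComponent (a + e) (f * g) = 0 := by
      rw [homogeneousComponent_of_mem ((mem_homogeneousSubmodule _ _).mpr hfg)]
      rw [if_neg (by omega)]
    rw [h4] at h2
    rcases mul_eq_zero.mp h2.symm with h | h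
    · exact absurd h hf0
    · exact h
  have hb : g = homogeneousComponent b g := by
    conv_lhs => rw [← sum_homogeneousComponent g]
    rcases le_or_gt b g.totalDegree with hble | hblt
    · exact Finset.sum_eq_single_of_mem b (Finset.mem_range.mpr (by omega))
        (fun i _ hne => hcomp i hne)
    · rw [Finset.sum_eq_zero (fun i hi => hcomp i
        (by have := Finset.mem_range.mp hi; omega)),
        homogeneousComponent_eq_zero _ g hblt]
  have hbg := homogeneousComponent_isHomogeneous b g
  rwa [← hb] at hbg

def tnum (K : Type*) [Field K] (i : Fin 9) : K := (((i : ℕ) + 1 : ℕ) : K)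

lemma tnum_inj [CharZero K] : Function.Injective (tnum K) := by
  intro i j h
  simp only [tnum] at h
  have h2 := Nat.cast_inj (R := K) |>.mp h
  exact Fin.ext (by omega)

lemma tnum_sum : (∑ i : Fin 9, tnum K i) = ((45 : ℕ) : K) := by
  simp only [tnum]
  rw [← Nat.cast_sum]
  congr 1

lemma main_induction [CharZero K] (m : ℕ) : ∀ (G : MvPolynomial (Fin 3) K),
    G.IsHomogeneous (3 * m) → (∀ i : Fin 9, G ∈ pointIdeal K (ptv (tnum K i)) ^ m) →
    G ∈ Submodule.span K {(Cb K) ^ m} := by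
  induction m with
  | zero =>
    intro G hGh _
    rw [pow_zero, Submodule.mem_span_singleton]
    have hGh0 : G.IsHomogeneous 0 := by simpa using hGh
    have h1 := homogeneousComponent_of_mem
      ((mem_homogeneousSubmodule _ _).mpr hGh0) (m := 0)
    rw [if_pos rfl, homogeneousComponent_zero] at h1
    exact ⟨coeff 0 G, by rw [smul_eq_C_mul, mul_one, h1]⟩
  | succ m ih =>
    intro G hGh hGm
    have hφ : aeval (pmap K) G = 0 := by
      by_contra hne
      set φ := aeval (pmap K) G with hφdef
      set q : Polynomial K := ∏ i : Fin 9, (Polynomial.X - Polynomial.C (tnum K i)) with hq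
      have hmono : q.Monic :=
        Polynomial.monic_prod_of_monic _ _ (fun i _ => Polynomial.monic_X_sub_C _)
      have hdegq : q.natDegree = 9 := by
        rw [hq, Polynomial.natDegree_prod _ _ (fun i _ => Polynomial.X_sub_C_ne_zero _)]
        simp [Polynomial.natDegree_X_sub_C]
      have hcop : Pairwise (Function.onFun IsCoprime
          fun i : Fin 9 => (Polynomial.X - Polynomial.C (tnum K i)) ^ (m + 1)) :=
        fun i j hij => ((Polynomial.pairwise_coprime_X_sub_C tnum_inj) hij).pow
      have hdvd : q ^ (m + 1) ∣ φ := by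
        rw [hq, ← Finset.prod_pow]
        apply Fintype.prod_dvd_of_coprime hcop
        intro i
        exact Phi_pow_dvd (tnum K i) (hGm i)
      obtain ⟨r, hr⟩ := hdvd
      have hr0 : r ≠ 0 := fun h => hne (by rw [hφdef] at hr ⊢; rw [hr, h, mul_zero])
      have hq0 : q ^ (m + 1) ≠ 0 := (hmono.pow _).ne_zero
      have hdeg : φ.natDegree = 9 * (m + 1) + r.natDegree := by
        rw [hr, Polynomial.natDegree_mul hq0 hr0, Polynomial.natDegree_pow, hdegq]
        ring
      have hdegle : φ.natDegree ≤ 3 * (3 * (m + 1)) := Phi_natDegree hGh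
      have hrdeg : r.natDegree = 0 := by omega
      obtain ⟨c, hc⟩ : ∃ c, r = Polynomial.C c :=
        ⟨r.coeff 0, Polynomial.eq_C_of_natDegree_eq_zero hrdeg⟩
      have hc0 : c ≠ 0 := fun h => hr0 (by rw [hc, h, map_zero])
      have hdq : (q ^ (m + 1)).natDegree = 9 * (m + 1) := by
        rw [Polynomial.natDegree_pow, hdegq]; ring
      have hnext : (q ^ (m + 1)).coeff (9 * (m + 1) - 1) = -((m + 1 : ℕ) * 45 : ℕ) := by
        have h1 := Polynomial.nextCoeff_of_natDegree_pos
          (p := q ^ (m + 1)) (by rw [hdq]; omega)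
        rw [hdq] at h1
        rw [← h1, Polynomial.Monic.nextCoeff_pow hmono]
        rw [hq, Polynomial.prod_X_sub_C_nextCoeff, tnum_sum]
        rw [nsmul_eq_mul]
        push_cast
        ring
      have hcoeff : φ.coeff (9 * (m + 1) - 1) = 0 := by
        have := Phi_coeff_top hGh (by omega)
        rw [show 3 * (3 * (m + 1)) = 9 * (m + 1) by ring] at this
        exact this
      rw [hr, hc, Polynomial.coeff_mul_C, hnext] at hcoeff
      have h45 : ((m + 1 : ℕ) * 45 : ℕ) ≠ (0 : ℕ) := by omega
      have hmul : (-(((m + 1 : ℕ) * 45 : ℕ) : K)) * c = 0 := hcoeff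
      rcases mul_eq_zero.mp hmul with h | h
      · exact h45 (Nat.cast_eq_zero.mp (neg_eq_zero.mp h))
      · exact absurd h hc0
    obtain ⟨G', hG'⟩ := Cb_dvd_of_Phi_zero hGh hφ
    have hmul : (Cb K * G').IsHomogeneous (3 + 3 * m) := by
      rw [← hG', show (3 : ℕ) + 3 * m = 3 * (m + 1) by ring]
      exact hGh
    have hG'hom : G'.IsHomogeneous (3 * m) := hom_of_mul Cb_hom Cb_ne_zero hmul
    have hG'mem : ∀ i : Fin 9, G' ∈ pointIdeal K (ptv (tnum K i)) ^ m := by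
      intro i
      apply mem_pow_of_tau
      apply colon_step (tau_Cb_hom (tnum K i)) (tau_Cb_mem (tnum K i))
        (coeff_tau_Cb (tnum K i))
      rw [← map_mul, ← hG']
      exact tau_mem_pow _ (hGm i)
    have hspan := ih G' hG'hom hG'mem
    rw [Submodule.mem_span_singleton] at hspan ⊢
    obtain ⟨a, ha⟩ := hspan
    refine ⟨a, ?_⟩
    rw [hG', ← ha, smul_eq_C_mul, smul_eq_C_mul]
    ring

lemma key_piece [CharZero K] (m : ℕ) :
    idealPiece (fatIdeal (fun i => ptv (tnum K i)) fun _ => m) (3 * m)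
      = Submodule.span K {(Cb K) ^ m} := by
  apply le_antisymm
  · intro G hG
    obtain ⟨hGI, hGh⟩ := hG
    have hGh' : G.IsHomogeneous (3 * m) := (mem_homogeneousSubmodule _ _).mp hGh
    have hGI' : ∀ i : Fin 9, G ∈ pointIdeal K (ptv (tnum K i)) ^ m := by
      intro i
      have h2 : G ∈ fatIdeal (fun i => ptv (tnum K i)) (fun _ => m) := hGI
      rw [fatIdeal, Ideal.mem_iInf] at h2
      exact h2 i
    exact main_induction m G hGh' hGI'
  · rw [Submodule.span_le, Set.singleton_subset_iff]
    refine Submodule.mem_inf.mpr ⟨?_, ?_⟩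
    · have : (Cb K) ^ m ∈ fatIdeal (fun i => ptv (tnum K i)) (fun _ => m) := by
        rw [fatIdeal, Ideal.mem_iInf]
        intro i
        exact Ideal.pow_mem_pow (Cb_mem (tnum K i)) m
      exact this
    · exact (mem_homogeneousSubmodule _ _).mpr (Cb_hom.pow m)

end StmtAux

/-- base case `k = 3m` in the proof of Proposition 6.8. -/
theorem stmt_13 (K : Type*) [Field K] [IsAlgClosed K] [CharZero K] :
    ∃ P : Fin 9 → Fin 3 → K,
      (∀ i, P i ≠ 0) ∧
      (∀ i j, i ≠ j → ∀ c : K, c • P i ≠ P j) ∧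
      ∀ m : ℕ, 1 ≤ m →
        Module.finrank K ↥(idealPiece (fatIdeal P fun _ => m) (3 * m)) = 1 := by
  refine ⟨fun i => ptv (tnum K i), ?_, ?_, ?_⟩
  · intro i h
    have h0 := congrFun h 0
    simp [ptv] at h0
  · intro i j hij c hc
    have h0 := congrFun hc 0
    have h1 := congrFun hc 1
    simp [ptv, Pi.smul_apply, smul_eq_mul] at h0 h1
    subst h0
    rw [one_mul] at h1
    exact hij (tnum_inj h1)
  · intro m _
    rw [key_piece]
    exact finrank_span_singleton (pow_ne_zero _ Cb_ne_zero)
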